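/- Let t ∈ GL_n(F_q) be a semisimple reflection with fixed hyperplane H and det(t)-eigenline L, and let α = (α_1,...,α_m) be a composition of n. Then a complete α-flag {0} ⊂ V_{α_1} ⊂ V_{α_1+α_2} ⊂ ··· ⊂ F_q^n is stabilized by t if and only if there exists an index i such that V_{α_1+···+α_j} ⊆ H for all j < i and L ⊆ V_{α_1+···+α_j} for all j ≥ i. Consequently the number of t-stable α-flags equals the sum over i = 1,...,m of the Gaussian multinomial [n−1 choose α − e_i]_q. -/

import Mathlib

/-- An `α`-flag in `F^n` for a composition `α = (α_1,…,α_m)`: an increasing chain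
of subspaces `V_j` with `dim V_j = α_1 + ⋯ + α_{j+1}` (so the last one is all of
`F^n` when `Σ α = n`). -/
def IsFlag {F : Type*} [Field F] {m n : ℕ} (α : Fin m → ℕ)
    (V : Fin m → Submodule F (Fin n → F)) : Prop :=
  Monotone V ∧
    ∀ j : Fin m, Module.finrank F (V j) = ∑ i ∈ Finset.univ.filter (· ≤ j), α i

open Module Submodule Finset

private lemma natCard_sigma {ι : Type*} [Fintype ι] (f : ι → Type*) [∀ i, Finite (f i)] :
    Nat.card (Σ i, f i) = ∑ i, Nat.card (f i) := by
  letI := fun i => Fintype.ofFinite (f i)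
  simp [Nat.card_eq_fintype_card, Fintype.card_sigma]

private lemma sum_filter_lt {m : ℕ} (α : Fin m → ℕ) {i j : Fin m} (hj : j < i) :
    ∑ k ∈ Finset.univ.filter (· ≤ j), (if k = i then α k - 1 else α k)
      = ∑ k ∈ Finset.univ.filter (· ≤ j), α k := by
  refine Finset.sum_congr rfl fun k hk => ?_
  simp only [Finset.mem_filter] at hk
  exact if_neg (fun h => absurd (h ▸ hk.2) (not_le.mpr hj))

private lemma sum_filter_ge {m : ℕ} (α : Fin m → ℕ) {i j : Fin m} (hpos : 0 < α i)
    (hij : i ≤ j) :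
    ∑ k ∈ Finset.univ.filter (· ≤ j), (if k = i then α k - 1 else α k) + 1
      = ∑ k ∈ Finset.univ.filter (· ≤ j), α k := by
  have hi : i ∈ Finset.univ.filter (· ≤ j) := by simp [hij]
  rw [← Finset.add_sum_erase _ _ hi, ← Finset.add_sum_erase _ α hi]
  have : ∑ k ∈ (Finset.univ.filter (· ≤ j)).erase i, (if k = i then α k - 1 else α k)
      = ∑ k ∈ (Finset.univ.filter (· ≤ j)).erase i, α k := by
    refine Finset.sum_congr rfl fun k hk => if_neg (Finset.ne_of_mem_erase hk)
  rw [this, if_pos rfl]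
  omega

section Aux

variable {F : Type*} [Field F] {n m : ℕ}

/-- Characterization of stable flags. -/
private lemma stab_iff (T : (Fin n → F) →ₗ[F] (Fin n → F)) (d : F)
    (H L : Submodule F (Fin n → F)) (hd : d ≠ 1)
    (hfix : ∀ v ∈ H, T v = v) (heig : ∀ v ∈ L, T v = d • v)
    (hL1 : Module.finrank F L = 1) (hsup : H ⊔ L = ⊤) (hm : 0 < m)
    (α : Fin m → ℕ) (hsum : ∑ i, α i = n)
    (V : Fin m → Submodule F (Fin n → F)) (hV : IsFlag α V) :
    (∀ j, ∀ v ∈ V j, T v ∈ V j) ↔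
      ∃ i : Fin m, (∀ j, j < i → V j ≤ H) ∧ (∀ j, i ≤ j → L ≤ V j) := by
  classical
  constructor
  · intro hstab
    have claim : ∀ j, ¬ (L ≤ V j) → V j ≤ H := by
      intro j hnle v hv
      have hvtop : v ∈ H ⊔ L := by rw [hsup]; trivial
      obtain ⟨h, hh, l, hl, rfl⟩ := Submodule.mem_sup.mp hvtop
      have h1 : T (h + l) - (h + l) ∈ V j := sub_mem (hstab j _ hv) hv
      have h2 : T (h + l) - (h + l) = (d - 1) • l := by
        rw [map_add, hfix h hh, heig l hl, sub_smul, one_smul]; abel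
      rw [h2] at h1
      have hd0 : d - 1 ≠ 0 := sub_ne_zero.mpr hd
      have hlV : l ∈ V j := by
        have := (V j).smul_mem (d - 1)⁻¹ h1
        rwa [smul_smul, inv_mul_cancel₀ hd0, one_smul] at this
      by_cases hl0 : l = 0
      · simpa [hl0] using hh
      · exfalso
        apply hnle
        have hspan : Submodule.span F {l} = L := by
          refine Submodule.eq_of_le_of_finrank_le
            (Submodule.span_le.mpr (by simpa using hl)) ?_
          rw [hL1, finrank_span_singleton hl0]
        rw [← hspan]
        exact Submodule.span_le.mpr (by simpa using hlV)
    have hjm : m - 1 < m := by omega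
    set jm : Fin m := ⟨m - 1, hjm⟩ with hjmdef
    have hle : ∀ j : Fin m, j ≤ jm := by
      intro j
      have := j.isLt
      exact Fin.mk_le_mk.mpr (by omega) |>.trans_eq rfl
    have hfilt : Finset.univ.filter (· ≤ jm) = Finset.univ :=
      Finset.filter_true_of_mem fun j _ => hle j
    have htop : V jm = ⊤ := by
      apply Submodule.eq_top_of_finrank_eq
      rw [hV.2 jm, hfilt, hsum, Module.finrank_fin_fun]
    have hLtop : L ≤ V jm := htop ▸ le_top
    have hsne : (Finset.univ.filter (fun j => L ≤ V j)).Nonempty :=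
      ⟨jm, by simp [hLtop]⟩
    set i := (Finset.univ.filter (fun j => L ≤ V j)).min' hsne with hidef
    refine ⟨i, ?_, ?_⟩
    · intro j hj
      apply claim
      intro hLe
      exact absurd (Finset.min'_le _ j (by simp [hLe])) (not_le.mpr hj)
    · intro j hij
      have hiL : L ≤ V i := by
        have := Finset.min'_mem _ hsne
        simpa using this
      exact hiL.trans (hV.1 hij)
  · rintro ⟨i, h1, h2⟩ j v hv
    rcases lt_or_ge j i with hj | hj
    · rw [hfix v (h1 j hj hv)]; exact hv
    · have hvtop : v ∈ H ⊔ L := by rw [hsup]; trivial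
      obtain ⟨h, hh, l, hl, rfl⟩ := Submodule.mem_sup.mp hvtop
      have : T (h + l) = (h + l) + (d - 1) • l := by
        rw [map_add, hfix h hh, heig l hl, sub_smul, one_smul]; abel
      rw [this]
      exact add_mem hv ((V j).smul_mem _ (h2 j hj hl))

private lemma index_unique (H L : Submodule F (Fin n → F))
    (hinf : H ⊓ L = ⊥) (hL1 : Module.finrank F L = 1)
    {V : Fin m → Submodule F (Fin n → F)} {i i' : Fin m}
    (h : (∀ j, j < i → V j ≤ H) ∧ (∀ j, i ≤ j → L ≤ V j))
    (h' : (∀ j, j < i' → V j ≤ H) ∧ (∀ j, i' ≤ j → L ≤ V j)) : i = i' := by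
  have key : ∀ (a b : Fin m),
      (∀ j, j < a → V j ≤ H) → (∀ j, b ≤ j → L ≤ V j) → ¬ b < a := by
    intro a b ha hb hba
    have hLH : L ≤ H := (hb b le_rfl).trans (ha b hba)
    have : L = ⊥ := by
      rw [← hinf]
      exact le_antisymm (le_inf hLH le_rfl) inf_le_right
      
    rw [this] at hL1
    simp [finrank_bot] at hL1
  exact le_antisymm (not_lt.mp (key i i' h.1 h'.2)) (not_lt.mp (key i' i h'.1 h.2))

end Aux

private lemma card_slice {F : Type*} [Field F] {n m : ℕ}
    (H L : Submodule F (Fin n → F)) (i : Fin m) (α : Fin m → ℕ) (hpos : 0 < α i)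
    (ψ : (Fin (n - 1) → F) →ₗ[F] (Fin n → F)) (hinj : Function.Injective ψ)
    (hrange : LinearMap.range ψ = H)
    (hinf : H ⊓ L = ⊥) (hsup : H ⊔ L = ⊤) (hL1 : Module.finrank F L = 1) :
    Nat.card {V : Fin m → Submodule F (Fin n → F) // IsFlag α V ∧
        (∀ j, j < i → V j ≤ H) ∧ (∀ j, i ≤ j → L ≤ V j)}
      = Nat.card {W : Fin m → Submodule F (Fin (n - 1) → F) //
          IsFlag (fun j => if j = i then α j - 1 else α j) W} := by
  classical
  apply Nat.card_congr
  -- basic facts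
  have fact1 : ∀ W : Submodule F (Fin (n - 1) → F),
      Module.finrank F (W.map ψ) = Module.finrank F W :=
    fun W => ((Submodule.equivMapOfInjective ψ hinj W).finrank_eq).symm
  have fact2 : ∀ W : Submodule F (Fin (n - 1) → F), W.map ψ ≤ H := by
    intro W
    rw [← hrange]
    exact LinearMap.map_le_range
  have fact3 : ∀ A : Submodule F (Fin n → F), A ≤ H → (A ⊔ L) ⊓ H = A := by
    intro A hA
    have := inf_sup_assoc_of_le (x := H) L hA
    rw [hinf, bot_sup_eq] at this
    rw [inf_comm, sup_comm, ← this]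
  have factmod : ∀ B : Submodule F (Fin n → F), L ≤ B → (B ⊓ H) ⊔ L = B := by
    intro B hB
    have := inf_sup_assoc_of_le (x := B) H hB
    rw [this, hsup, inf_top_eq]
  have fact4 : ∀ A : Submodule F (Fin n → F), A ≤ H →
      Module.finrank F (A ⊔ L : Submodule F (Fin n → F)) = Module.finrank F A + 1 := by
    intro A hA
    have h0 : A ⊓ L = ⊥ :=
      le_antisymm (le_trans (inf_le_inf_right L hA) hinf.le) bot_le
    have := Submodule.finrank_sup_add_finrank_inf_eq A L
    rw [h0, finrank_bot, hL1, add_zero] at this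
    omega
  have c1 : ∀ W : Submodule F (Fin (n - 1) → F), (W.map ψ).comap ψ = W :=
    fun W => Submodule.comap_map_eq_of_injective hinj W
  have c2 : H.comap ψ = ⊤ := by
    rw [← hrange]
    exact Submodule.comap_map_eq_of_injective hinj ⊤ ▸ by
      rw [Submodule.map_top]
  have c4 : ∀ Vj : Submodule F (Fin n → F), (Vj.comap ψ).map ψ = H ⊓ Vj := by
    intro Vj
    rw [Submodule.map_comap_eq, hrange]
  have c3 : ∀ X : Submodule F (Fin n → F), X.comap ψ = (X ⊓ H).comap ψ := by
    intro X
    rw [Submodule.comap_inf, c2, inf_top_eq]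
  have toFun_mem : ∀ V : Fin m → Submodule F (Fin n → F),
      (IsFlag α V ∧ (∀ j, j < i → V j ≤ H) ∧ (∀ j, i ≤ j → L ≤ V j)) →
      IsFlag (fun j => if j = i then α j - 1 else α j) (fun j => (V j).comap ψ) := by
    rintro V ⟨hVf, hP1, hP2⟩
    refine ⟨fun j j' h => Submodule.comap_mono (hVf.1 h), fun j => ?_⟩
    have hr := fact1 ((V j).comap ψ)
    rw [c4] at hr
    rcases lt_or_ge j i with hj | hj
    · have hVH : H ⊓ V j = V j := inf_eq_right.mpr (hP1 j hj)
      simp only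
      rw [← hr, hVH, sum_filter_lt α hj]
      exact hVf.2 j
    · have hLV : L ≤ V j := hP2 j hj
      have e1 : (V j ⊓ H) ⊔ L = V j := factmod _ hLV
      have e2 := fact4 (V j ⊓ H) inf_le_right
      rw [e1] at e2
      have e3 : Module.finrank F (H ⊓ V j : Submodule F (Fin n → F))
          = Module.finrank F (V j ⊓ H : Submodule F (Fin n → F)) := by rw [inf_comm]
      have hflag := hVf.2 j
      have hsge := sum_filter_ge α hpos hj
      simp only
      omega
  have invFun_mem : ∀ W : Fin m → Submodule F (Fin (n - 1) → F),
      IsFlag (fun j => if j = i then α j - 1 else α j) W →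
      IsFlag α (fun j => if i ≤ j then (W j).map ψ ⊔ L else (W j).map ψ) ∧
        (∀ j, j < i → (if i ≤ j then (W j).map ψ ⊔ L else (W j).map ψ) ≤ H) ∧
        (∀ j, i ≤ j → L ≤ (if i ≤ j then (W j).map ψ ⊔ L else (W j).map ψ)) := by
    intro W hWf
    refine ⟨⟨?_, ?_⟩, fun j hj => ?_, fun j hj => ?_⟩
    · intro j j' hjj'
      by_cases h1 : i ≤ j
      · have h2 : i ≤ j' := h1.trans hjj'
        simp only [if_pos h1, if_pos h2]
        exact sup_le_sup_right (Submodule.map_mono (hWf.1 hjj')) L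
      · by_cases h2 : i ≤ j'
        · simp only [if_neg h1, if_pos h2]
          exact le_trans (Submodule.map_mono (hWf.1 hjj')) le_sup_left
        · simp only [if_neg h1, if_neg h2]
          exact Submodule.map_mono (hWf.1 hjj')
    · intro j
      dsimp only
      show Module.finrank F ↥(if i ≤ j then (W j).map ψ ⊔ L else (W j).map ψ) = _
      by_cases h1 : i ≤ j
      · rw [if_pos h1]
        rw [fact4 _ (fact2 _), fact1]
        have := hWf.2 j
        simp only at this
        rw [this]
        exact sum_filter_ge α hpos h1
      · rw [if_neg h1]
        rw [fact1]
        have := hWf.2 j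
        simp only at this
        rw [this]
        exact sum_filter_lt α (not_le.mp h1)
    · rw [if_neg (not_le.mpr hj)]
      exact fact2 _
    · rw [if_pos hj]
      exact le_sup_right
  exact
    { toFun := fun V => ⟨fun j => (V.1 j).comap ψ, toFun_mem V.1 V.2⟩
      invFun := fun W => ⟨fun j => if i ≤ j then (W.1 j).map ψ ⊔ L else (W.1 j).map ψ,
        invFun_mem W.1 W.2⟩
      left_inv := by
        rintro ⟨V, hVf, hP1, hP2⟩
        apply Subtype.ext
        funext j
        dsimp only
        by_cases h1 : i ≤ j
        · rw [if_pos h1, c4]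
          rw [inf_comm]
          exact factmod _ (hP2 j h1)
        · rw [if_neg h1, c4]
          exact inf_eq_right.mpr (hP1 j (not_le.mp h1))
      right_inv := by
        rintro ⟨W, hWf⟩
        apply Subtype.ext
        funext j
        dsimp only
        by_cases h1 : i ≤ j
        · rw [if_pos h1, c3, fact3 _ (fact2 _), c1]
        · rw [if_neg h1, c1] }


theorem stmt6 (F : Type*) [Field F] [Fintype F] (n m : ℕ)
    (t : GL (Fin n) F) (H L : Submodule F (Fin n → F))
    (hH : Module.finrank F H = n - 1)
    (hfix : ∀ v ∈ H, Matrix.mulVec (t : Matrix (Fin n) (Fin n) F) v = v)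
    (hL : Module.finrank F L = 1)
    (heig : ∀ v ∈ L, Matrix.mulVec (t : Matrix (Fin n) (Fin n) F) v
        = Matrix.det (t : Matrix (Fin n) (Fin n) F) • v)
    (hdet : Matrix.det (t : Matrix (Fin n) (Fin n) F) ≠ 1)
    (α : Fin m → ℕ) (hpos : ∀ i, 0 < α i) (hsum : ∑ i, α i = n) :
    (∀ V : Fin m → Submodule F (Fin n → F), IsFlag α V →
      ((∀ j, ∀ v ∈ V j, Matrix.mulVec (t : Matrix (Fin n) (Fin n) F) v ∈ V j)
        ↔ ∃ i : Fin m, (∀ j, j < i → V j ≤ H) ∧ (∀ j, i ≤ j → L ≤ V j)))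
    ∧ Nat.card {V : Fin m → Submodule F (Fin n → F) // IsFlag α V ∧
          ∀ j, ∀ v ∈ V j, Matrix.mulVec (t : Matrix (Fin n) (Fin n) F) v ∈ V j}
      = ∑ i : Fin m,
          Nat.card {W : Fin m → Submodule F (Fin (n - 1) → F) //
            IsFlag (fun j => if j = i then α j - 1 else α j) W} := by
  classical
  have hn : 1 ≤ n := by
    have h1 : Module.finrank F L ≤ Module.finrank F (Fin n → F) := Submodule.finrank_le L
    rw [hL, Module.finrank_fin_fun] at h1
    exact h1
  have hm : 0 < m := by
    rcases Nat.eq_zero_or_pos m with h | h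
    · subst h; simp at hsum; omega
    · exact h
  have hinf : H ⊓ L = ⊥ := by
    rw [eq_bot_iff]
    rintro v ⟨hvH, hvL⟩
    have h1 := hfix v hvH
    have h2 := heig v hvL
    rw [h1] at h2
    have h3 : (Matrix.det (t : Matrix (Fin n) (Fin n) F) - 1) • v = 0 := by
      rw [sub_smul, one_smul, ← h2, sub_self]
    rcases smul_eq_zero.mp h3 with h | h
    · exact absurd (sub_eq_zero.mp h) hdet
    · simp [h]
  have hsup : H ⊔ L = ⊤ := by
    apply Submodule.eq_top_of_finrank_eq
    have hh := Submodule.finrank_sup_add_finrank_inf_eq H L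
    rw [hinf, finrank_bot, add_zero, hH, hL] at hh
    rw [Module.finrank_fin_fun]
    omega
  have key : ∀ V : Fin m → Submodule F (Fin n → F), IsFlag α V →
      ((∀ j, ∀ v ∈ V j, Matrix.mulVec (t : Matrix (Fin n) (Fin n) F) v ∈ V j)
        ↔ ∃ i : Fin m, (∀ j, j < i → V j ≤ H) ∧ (∀ j, i ≤ j → L ≤ V j)) := by
    intro V hV
    exact stab_iff ((t : Matrix (Fin n) (Fin n) F).mulVecLin)
      (Matrix.det (t : Matrix (Fin n) (Fin n) F)) H L hdet
      (fun v hv => hfix v hv) (fun v hv => heig v hv) hL hsup hm α hsum V hV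
  refine ⟨key, ?_⟩
  haveI : Finite (Submodule F (Fin n → F)) :=
    Finite.of_injective (fun p => (p : Set (Fin n → F))) SetLike.coe_injective
  haveI : Finite (Submodule F (Fin (n - 1) → F)) :=
    Finite.of_injective (fun p => (p : Set (Fin (n - 1) → F))) SetLike.coe_injective
  have hfd : Module.finrank F (Fin (n - 1) → F) = Module.finrank F H := by
    rw [Module.finrank_fin_fun, hH]
  let φ := LinearEquiv.ofFinrankEq (Fin (n - 1) → F) H hfd
  let ψ : (Fin (n - 1) → F) →ₗ[F] (Fin n → F) := H.subtype ∘ₗ φ.toLinearMap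
  have hinj : Function.Injective ψ := H.injective_subtype.comp φ.injective
  have hrange : LinearMap.range ψ = H := by
    rw [LinearMap.range_comp, LinearEquiv.range, Submodule.map_top, Submodule.range_subtype]
  have hbij : Nat.card {V : Fin m → Submodule F (Fin n → F) // IsFlag α V ∧
        ∀ j, ∀ v ∈ V j, Matrix.mulVec (t : Matrix (Fin n) (Fin n) F) v ∈ V j}
      = Nat.card (Σ i : Fin m, {V : Fin m → Submodule F (Fin n → F) // IsFlag α V ∧
          (∀ j, j < i → V j ≤ H) ∧ (∀ j, i ≤ j → L ≤ V j)}) := by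
    apply Nat.card_congr
    apply Equiv.symm
    refine Equiv.ofBijective
      (fun x => ⟨x.2.1, x.2.2.1, (key x.2.1 x.2.2.1).mpr ⟨x.1, x.2.2.2⟩⟩) ⟨?_, ?_⟩
    · rintro ⟨i, V, hV⟩ ⟨i', V', hV'⟩ hEq
      have hVV : V = V' := congrArg Subtype.val hEq
      subst hVV
      have hii : i = i' := index_unique H L hinf hL hV.2 hV'.2
      subst hii
      rfl
    · rintro ⟨V, hVf, hst⟩
      obtain ⟨i, hi⟩ := (key V hVf).mp hst
      exact ⟨⟨i, V, hVf, hi⟩, rfl⟩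
  rw [hbij, natCard_sigma]
  exact Finset.sum_congr rfl fun i _ =>
    card_slice H L i α (hpos i) ψ hinj hrange hinf hsup hL
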